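/- Let I be a set of n items with positive integer weights w_i and profits p_i ≤ p_max. Define W_I[k] = min{Σᵢ wᵢxᵢ : x ∈ {0,1}^n, Σᵢ pᵢxᵢ ≥ k}. If k is a break point of W_I (i.e., W_I[k] < W_I[k+1]) and k ≥ p_max, then the interval [k − p_max, k) contains a break point of W_I, i.e., W_I[k − p_max] < W_I[k]. -/

import Mathlib

/-- `minWeight n w p k` is the minimum total weight of a subset of the `n` items with
total profit at least `k` (the weight sequence `W_I[k]`), with value `⊤` if no such
subset exists. -/
noncomputable def minWeight (n : ℕ) (w p : Fin n → ℕ) (k : ℕ) : ℕ∞ :=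
  (((Finset.univ : Finset (Finset (Fin n))).filter fun S => k ≤ ∑ i ∈ S, p i).inf)
    fun S => ((∑ i ∈ S, w i : ℕ) : ℕ∞)

/-- If all weights are positive and all profits lie in `[1, p_max]`, and `k ≥ p_max` is a
break point of the weight sequence `W_I` (i.e. `W_I[k] < W_I[k+1]`), then the interval
`[k − p_max, k)` contains a break point, i.e. `W_I[k − p_max] < W_I[k]`. -/
theorem weight_sequence_breakpoint (n pmax : ℕ) (w p : Fin n → ℕ)
    (hw : ∀ i, 1 ≤ w i) (hp : ∀ i, 1 ≤ p i ∧ p i ≤ pmax) (hpmax : 0 < pmax)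
    (k : ℕ) (hk : pmax ≤ k)
    (hbreak : minWeight n w p k < minWeight n w p (k + 1)) :
    minWeight n w p (k - pmax) < minWeight n w p k := by
  classical
  set F := (Finset.univ : Finset (Finset (Fin n))).filter fun S => k ≤ ∑ i ∈ S, p i with hF
  have hlt : minWeight n w p k < ⊤ := lt_of_lt_of_le hbreak le_top
  have hFne : F.Nonempty := by
    by_contra h
    rw [Finset.not_nonempty_iff_eq_empty] at h
    simp [minWeight, ← hF, h] at hlt
  obtain ⟨S, hSmem, hSinf⟩ := F.exists_mem_eq_inf hFne
    (fun S => ((∑ i ∈ S, w i : ℕ) : ℕ∞))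
  have hSval : minWeight n w p k = ((∑ i ∈ S, w i : ℕ) : ℕ∞) := hSinf
  have hSk : k ≤ ∑ i ∈ S, p i := (Finset.mem_filter.mp hSmem).2
  -- profit of S is exactly k
  have hSeq : ∑ i ∈ S, p i = k := by
    by_contra h
    have h1 : k + 1 ≤ ∑ i ∈ S, p i := lt_of_le_of_ne hSk (Ne.symm h)
    have : minWeight n w p (k + 1) ≤ ((∑ i ∈ S, w i : ℕ) : ℕ∞) := by
      apply Finset.inf_le
      simp [h1]
      omega
    rw [← hSval] at this
    exact absurd hbreak (not_lt.mpr this)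
  -- S is nonempty
  have hSne : S.Nonempty := by
    rcases Finset.eq_empty_or_nonempty S with h | h
    · exfalso; rw [h] at hSeq; simp at hSeq; omega
    · exact h
  obtain ⟨i, hi⟩ := hSne
  -- consider S.erase i
  have hpsum : ∑ j ∈ S.erase i, p j = k - p i := by
    have := Finset.add_sum_erase S p hi
    omega
  have hprofit : k - pmax ≤ ∑ j ∈ S.erase i, p j := by
    have := (hp i).2
    omega
  have hle : minWeight n w p (k - pmax) ≤ ((∑ j ∈ S.erase i, w j : ℕ) : ℕ∞) := by
    apply Finset.inf_le
    simp only [Finset.mem_filter, Finset.mem_univ, true_and]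
    exact hprofit
  have hwsum : ∑ j ∈ S.erase i, w j < ∑ j ∈ S, w j := by
    have := Finset.add_sum_erase S w hi
    have := hw i
    omega
  calc minWeight n w p (k - pmax) ≤ ((∑ j ∈ S.erase i, w j : ℕ) : ℕ∞) := hle
    _ < ((∑ j ∈ S, w j : ℕ) : ℕ∞) := by exact_mod_cast hwsum
    _ = minWeight n w p k := hSval.symm
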